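/- Let H1 = (V1, 𝓔1) and H2 = (V2, 𝓔2) be finite hypergraphs. If H1 and H2 are isomorphic, then for every iteration t ≥ 0 the multisets of 1-GWL vertex labels coincide, i.e. {{ l^t_{H1,i} : i ∈ V1 }} = {{ l^t_{H2,i} : i ∈ V2 }}. Equivalently (Proposition 1): if there exists t ≥ 0 such that {{ l^t_{H1,i} : i ∈ V1 }} ≠ {{ l^t_{H2,i} : i ∈ V2 }} (the 1-GWL test distinguishes H1 and H2), then H1 and H2 are not isomorphic. -/

import Mathlib

/-- A finite hypergraph on a vertex type `V`: a finite set of nonempty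
finite hyperedges. -/
structure GWLHypergraph (V : Type) [DecidableEq V] where
  edges : Finset (Finset V)
  edges_nonempty : ∀ e ∈ edges, e.Nonempty

namespace GWLHypergraph

variable {V : Type} [DecidableEq V]

/-- The incident hyperedges `E_i` of a vertex `i`. -/
def incident (H : GWLHypergraph V) (i : V) : Finset (Finset V) :=
  H.edges.filter (fun e => i ∈ e)

end GWLHypergraph

/-- The type of 1-GWL labels at iteration `t`. -/
def LabelType : ℕ → Type
  | 0 => ℕ
  | t + 1 => Multiset (LabelType t × Multiset (LabelType t))

/-- The 1-GWL vertex label `l^t_{H,i}`: all vertices start with label `0`, and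
`l^{t+1}_i = {{ (l^t_i, l^t_e) : e ∈ E_i }}` where `l^t_e = {{ l^t_j : j ∈ e }}`. -/
def gwlLabel {V : Type} [DecidableEq V] (H : GWLHypergraph V) : (t : ℕ) → V → LabelType t
  | 0, _ => (0 : ℕ)
  | t + 1, i =>
      ((H.incident i).val.map fun e => (gwlLabel H t i, e.val.map (gwlLabel H t)))

/-- The 1-GWL hyperedge label `l^t_e = {{ l^t_j : j ∈ e }}`. -/
def gwlEdgeLabel {V : Type} [DecidableEq V] (H : GWLHypergraph V) (t : ℕ) (e : Finset V) :
    Multiset (LabelType t) :=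
  e.val.map (gwlLabel H t)

/-- The multiset of 1-GWL labels of all vertices, `{{ l^t_{H,i} : i ∈ V }}`. -/
def gwlMultiset {V : Type} [DecidableEq V] [Fintype V] (H : GWLHypergraph V) (t : ℕ) :
    Multiset (LabelType t) :=
  (Finset.univ : Finset V).val.map (gwlLabel H t)

/-- The UniGNN feature `h^t_{H,i}` computed by two-stage message passing with
first-stage aggregations `φ1`, second-stage aggregations `φ2` and constant initial
feature `c`:  `h^{t+1}_i = φ2 t (h^t_i) {{ φ1 t {{ h^t_j : j ∈ e }} : e ∈ E_i }}`. -/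
def uniFeat {V : Type} [DecidableEq V] {X : Type}
    (φ1 : ℕ → Multiset X → X) (φ2 : ℕ → X → Multiset X → X) (c : X)
    (H : GWLHypergraph V) : (t : ℕ) → V → X
  | 0, _ => c
  | t + 1, i =>
      φ2 t (uniFeat φ1 φ2 c H t i)
        ((H.incident i).val.map fun e => φ1 t (e.val.map (uniFeat φ1 φ2 c H t)))

/-- The multiset of UniGNN features of all vertices, `{{ h^t_{H,i} : i ∈ V }}`. -/
def uniFeatMultiset {V : Type} [DecidableEq V] [Fintype V] {X : Type}
    (φ1 : ℕ → Multiset X → X) (φ2 : ℕ → X → Multiset X → X) (c : X)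
    (H : GWLHypergraph V) (t : ℕ) : Multiset X :=
  (Finset.univ : Finset V).val.map (uniFeat φ1 φ2 c H t)

/-- `f` is an isomorphism between hypergraphs `H1` and `H2`. -/
def IsHypergraphIso {V1 V2 : Type} [DecidableEq V1] [DecidableEq V2]
    (H1 : GWLHypergraph V1) (H2 : GWLHypergraph V2) (f : V1 ≃ V2) : Prop :=
  ∀ e : Finset V1, e ∈ H1.edges ↔ e.image f ∈ H2.edges

lemma incident_image {V1 V2 : Type} [DecidableEq V1] [DecidableEq V2]
    (H1 : GWLHypergraph V1) (H2 : GWLHypergraph V2) (f : V1 ≃ V2)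
    (hf : IsHypergraphIso H1 H2 f) (i : V1) :
    H2.incident (f i) = (H1.incident i).image (fun e => e.image f) := by
  ext e'
  simp only [GWLHypergraph.incident, Finset.mem_image, Finset.mem_filter]
  constructor
  · rintro ⟨he', hi⟩
    refine ⟨e'.image f.symm, ⟨?_, ?_⟩, ?_⟩
    · rw [hf]
      have : (e'.image ⇑f.symm).image ⇑f = e' := by
        rw [Finset.image_image]
        simp
      rwa [this]
    · simpa using Finset.mem_image_of_mem f.symm hi
    · rw [Finset.image_image]; simp
  · rintro ⟨e, ⟨he, hi⟩, rfl⟩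
    exact ⟨(hf e).1 he, Finset.mem_image_of_mem f hi⟩

lemma image_val {A B : Type} [DecidableEq B] {g : A → B}
    (hg : Function.Injective g) (s : Finset A) : (s.image g).val = s.val.map g := by
  rw [Finset.image_val, Multiset.dedup_eq_self.2 (s.nodup.map hg)]

lemma gwlLabel_eq {V1 V2 : Type} [DecidableEq V1] [DecidableEq V2]
    (H1 : GWLHypergraph V1) (H2 : GWLHypergraph V2) (f : V1 ≃ V2)
    (hf : IsHypergraphIso H1 H2 f) :
    ∀ t (i : V1), gwlLabel H1 t i = gwlLabel H2 t (f i) := by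
  intro t
  induction t with
  | zero => intro i; rfl
  | succ t ih =>
    intro i
    show (H1.incident i).val.map _ = (H2.incident (f i)).val.map _
    have hinj : Function.Injective (fun e : Finset V1 => e.image f) := by
      intro a b h
      have := congrArg (fun s : Finset V2 => s.image f.symm) h
      simpa [Finset.image_image] using this
    rw [incident_image H1 H2 f hf i, image_val hinj, Multiset.map_map]
    refine Multiset.map_congr rfl ?_
    intro e _
    simp only [Function.comp]
    rw [← ih i, image_val f.injective, Multiset.map_map]
    congr 1
    exact Multiset.map_congr rfl fun j _ => ih j

/-- **Proposition 1 (1-GWL).** If two finite hypergraphs are isomorphic, then for every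
iteration `t` the multisets of 1-GWL vertex labels coincide; equivalently, if the 1-GWL
test distinguishes them at some iteration, they are not isomorphic. -/
theorem gwl_multiset_eq_of_iso
    {V1 V2 : Type} [DecidableEq V1] [Fintype V1] [DecidableEq V2] [Fintype V2]
    (H1 : GWLHypergraph V1) (H2 : GWLHypergraph V2)
    (hiso : ∃ f : V1 ≃ V2, IsHypergraphIso H1 H2 f) :
    ∀ t : ℕ, gwlMultiset H1 t = gwlMultiset H2 t := by
  obtain ⟨f, hf⟩ := hiso
  intro t
  unfold gwlMultiset
  have : (Finset.univ : Finset V2).val = (Finset.univ : Finset V1).val.map f := by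
    rw [← image_val f.injective]
    congr 1
    exact (Finset.image_univ_equiv f).symm
  rw [this, Multiset.map_map]
  exact Multiset.map_congr rfl fun i _ => gwlLabel_eq H1 H2 f hf t i
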